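/- Let $n$ be a positive integer and let $t$ be a real number with $-1 \le t < 1$ and $t \ne 0$. Then $\sum_{k=1}^{\infty} \frac{t^k}{k^2 \binom{n+k}{k}} = \mathrm{Li}_2(t) - H_n^{(2)} + \log(1-t) \sum_{k=1}^{n} \frac{1}{k}\Big(\frac{t-1}{t}\Big)^k - \sum_{k=1}^{n} \frac{H_k + H_{n-k} - H_n}{k} \Big(\frac{t-1}{t}\Big)^k$. -/

import Mathlib

open Finset Filter Real Topology

/-- The `n`-th harmonic number `H_n = ∑_{k=1}^n 1/k`, with `H_0 = 0`. -/
noncomputable def H (n : ℕ) : ℝ := ∑ i ∈ Finset.range n, (1 : ℝ) / (i + 1)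

/-- The generalized harmonic number of order 2, `H_n^{(2)} = ∑_{k=1}^n 1/k²`. -/
noncomputable def H2 (n : ℕ) : ℝ := ∑ i ∈ Finset.range n, (1 : ℝ) / (i + 1) ^ 2

/-- The dilogarithm function `Li₂(x) = ∑_{k=1}^∞ x^k/k²`. -/
noncomputable def Li2 (x : ℝ) : ℝ := ∑' k : ℕ, x ^ (k + 1) / ((k : ℝ) + 1) ^ 2


lemma choose_cast_eq (n k : ℕ) :
    (((n + k).choose k : ℕ) : ℝ) * (n.factorial * k.factorial) = (n + k).factorial := by
  have h := Nat.choose_mul_factorial_mul_factorial (Nat.le_add_left k n)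
  rw [Nat.add_sub_cancel] at h
  exact_mod_cast by rw [← h]; ring

lemma choose_pos_real (n k : ℕ) : (0:ℝ) < ((n + k).choose k : ℕ) := by
  exact_mod_cast Nat.choose_pos (Nat.le_add_left k n)

lemma inv_choose (n k : ℕ) :
    ((((n + k).choose k : ℕ) : ℝ))⁻¹ = n.factorial * k.factorial / (n + k).factorial := by
  have h := choose_cast_eq n k
  have h1 : (0:ℝ) < ((n+k).factorial : ℕ) := by exact_mod_cast (n+k).factorial_pos
  have h2 := choose_pos_real n k
  have h3 : (0:ℝ) < (n.factorial : ℕ) := by exact_mod_cast n.factorial_pos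
  have h4 : (0:ℝ) < (k.factorial : ℕ) := by exact_mod_cast k.factorial_pos
  field_simp
  linarith [h]

lemma summable_sq {t : ℝ} (h : |t| ≤ 1) :
    Summable (fun k : ℕ => t ^ (k+1) / ((k:ℝ)+1)^2) := by
  have hs : Summable (fun k : ℕ => 1 / ((k:ℝ)+1)^2) := by
    have := (summable_nat_add_iff (f := fun n : ℕ => 1 / (n:ℝ)^2) 1).mpr
      (Real.summable_one_div_nat_pow.mpr one_lt_two)
    simpa using this
  refine Summable.of_norm_bounded hs fun k => ?_
  have h1 : (0:ℝ) < ((k:ℝ)+1)^2 := by positivity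
  rw [norm_div, norm_pow, Real.norm_eq_abs, Real.norm_eq_abs, abs_of_pos h1]
  have hb : |t|^(k+1) ≤ 1 := pow_le_one₀ (abs_nonneg t) h
  gcongr
lemma fact_succ_cast (n : ℕ) : ((n+1).factorial : ℝ) = ((n:ℝ)+1) * n.factorial := by
  rw [Nat.factorial_succ]; push_cast; ring

lemma coeff_b (m k : ℕ) :
    (((k:ℝ)+1) * (((m+2) + (k+1)).choose (k+1) : ℝ))⁻¹
      = (((k:ℝ)+1) * (((m+1) + (k+1)).choose (k+1) : ℝ))⁻¹
        - (((k:ℝ)+2) * (((m+1) + (k+2)).choose (k+2) : ℝ))⁻¹ := by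
  have e1 := inv_choose (m+2) (k+1)
  have e2 := inv_choose (m+1) (k+1)
  have e3 := inv_choose (m+1) (k+2)
  rw [mul_inv, mul_inv, mul_inv, e1, e2, e3]
  have f1 : ((m+2+(k+1)).factorial : ℝ) = ((m:ℝ)+k+3) * (m+1+(k+1)).factorial := by
    rw [show m+2+(k+1) = (m+1+(k+1))+1 by ring]
    rw [fact_succ_cast]; push_cast; ring
  have f2 : ((m+1+(k+2)).factorial : ℝ) = ((m:ℝ)+k+3) * (m+1+(k+1)).factorial := by
    rw [show m+1+(k+2) = (m+1+(k+1))+1 by ring]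
    rw [fact_succ_cast]; push_cast; ring
  have f3 : (((m+2).factorial : ℕ) : ℝ) = ((m:ℝ)+2) * (m+1).factorial := by
    rw [fact_succ_cast]; push_cast; ring
  have f4 : (((k+2).factorial : ℕ) : ℝ) = ((k:ℝ)+2) * (k+1).factorial := by
    rw [fact_succ_cast]; push_cast; ring
  rw [f1, f2, f3, f4]
  have p1 : (0:ℝ) < ((m+1+(k+1)).factorial : ℕ) := by exact_mod_cast Nat.factorial_pos _
  have p2 : (0:ℝ) < ((m+1).factorial : ℕ) := by exact_mod_cast Nat.factorial_pos _
  have p3 : (0:ℝ) < ((k+1).factorial : ℕ) := by exact_mod_cast Nat.factorial_pos _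
  have q1 : (0:ℝ) < (k:ℝ)+1 := by positivity
  have q2 : (0:ℝ) < (k:ℝ)+2 := by positivity
  have q3 : (0:ℝ) < (m:ℝ)+k+3 := by positivity
  field_simp
  ring

lemma coeff_a (n k : ℕ) :
    (((k:ℝ)+1)^2 * ((n + (k+1)).choose (k+1) : ℝ))⁻¹
      - (((k:ℝ)+1)^2 * (((n+1) + (k+1)).choose (k+1) : ℝ))⁻¹
      = (1/((n:ℝ)+1)) * ((((k:ℝ)+1) * (((n+1) + (k+1)).choose (k+1) : ℝ))⁻¹) := by
  have e1 := inv_choose n (k+1)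
  have e2 := inv_choose (n+1) (k+1)
  rw [mul_inv, mul_inv, mul_inv, e1, e2]
  have f1 : ((n+1+(k+1)).factorial : ℝ) = ((n:ℝ)+k+2) * (n+(k+1)).factorial := by
    rw [show n+1+(k+1) = (n+(k+1))+1 by ring]
    rw [fact_succ_cast]; push_cast; ring
  have f2 : (((n+1).factorial : ℕ) : ℝ) = ((n:ℝ)+1) * n.factorial := by
    rw [fact_succ_cast]
  rw [f1, f2]
  have p1 : (0:ℝ) < ((n+(k+1)).factorial : ℕ) := by exact_mod_cast Nat.factorial_pos _
  have p2 : (0:ℝ) < (n.factorial : ℕ) := by exact_mod_cast Nat.factorial_pos _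
  have p3 : (0:ℝ) < ((k+1).factorial : ℕ) := by exact_mod_cast Nat.factorial_pos _
  have q1 : (0:ℝ) < (k:ℝ)+1 := by positivity
  have q2 : (0:ℝ) < (n:ℝ)+1 := by positivity
  have q3 : (0:ℝ) < (n:ℝ)+k+2 := by positivity
  field_simp
  ring

lemma hasSum_B1_lt {t : ℝ} (habs : |t| < 1) (ht : t ≠ 0) :
    HasSum (fun k : ℕ => t^(k+1) / (((k:ℝ)+1) * ((k:ℝ)+2)))
      (1 - (t-1)/t * Real.log (1-t)) := by
  set L := Real.log (1-t) with hL
  have h1 : HasSum (fun n : ℕ => t^(n+1)/((n:ℝ)+1)) (-L) :=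
    Real.hasSum_pow_div_log_of_abs_lt_one habs
  have h2 : HasSum (fun n : ℕ => t^(n+2)/((n:ℝ)+2)) (-L - t) := by
    have := (hasSum_nat_add_iff' (f := fun n : ℕ => t^(n+1)/((n:ℝ)+1)) 1).mpr h1
    simpa [pow_succ] using this.congr_fun fun n => by push_cast; ring_nf
  have h3 := h1.sub (h2.mul_left (1/t))
  have hfe : (fun n : ℕ => t^(n+1)/((n:ℝ)+1) - (1/t) * (t^(n+2)/((n:ℝ)+2)))
      = fun k : ℕ => t^(k+1) / (((k:ℝ)+1) * ((k:ℝ)+2)) := by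
    funext n
    have q1 : (0:ℝ) < (n:ℝ)+1 := by positivity
    have q2 : (0:ℝ) < (n:ℝ)+2 := by positivity
    field_simp
    ring
  rw [hfe] at h3
  have htt : t * t⁻¹ = 1 := mul_inv_cancel₀ ht
  have e : -L - 1/t * (-L - t) = 1 - (t-1)/t * L := by
    linear_combination (1+L) * htt
  rw [e] at h3
  exact h3

lemma summable_inv_sq : Summable (fun k : ℕ => 1 / ((k:ℝ)+1)^2) := by
  have := (summable_nat_add_iff (f := fun n : ℕ => 1 / (n:ℝ)^2) 1).mpr
    (Real.summable_one_div_nat_pow.mpr one_lt_two)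
  simpa using this

lemma hasSum_B1 {t : ℝ} (ht0 : -1 ≤ t) (ht1 : t < 1) (ht : t ≠ 0) :
    HasSum (fun k : ℕ => t^(k+1) / (((k:ℝ)+1) * ((k:ℝ)+2)))
      (1 - (t-1)/t * Real.log (1-t)) := by
  rcases eq_or_lt_of_le ht0 with h | h
  · -- t = -1
    subst h
    set c : ℕ → ℝ := fun n => (-1:ℝ)^(n+1)/(((n:ℝ)+1)*((n:ℝ)+2)) with hc_def
    have hsum : Summable c := by
      refine Summable.of_norm_bounded summable_inv_sq fun n => ?_
      have q1 : (0:ℝ) < (n:ℝ)+1 := by positivity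
      have q2 : (0:ℝ) < (n:ℝ)+2 := by positivity
      rw [hc_def]
      simp only [norm_div, norm_pow, norm_neg, norm_one, one_pow, Real.norm_eq_abs]
      rw [abs_of_pos (by positivity : (0:ℝ) < ((n:ℝ)+1)*((n:ℝ)+2))]
      rw [one_div, one_div]
      apply inv_anti₀ (by positivity)
      nlinarith
    have hc : HasSum c (∑' n, c n) := hsum.hasSum
    have habel := Real.tendsto_tsum_powerSeries_nhdsWithin_lt hc.tendsto_sum_nat
    have hg : Tendsto (fun x : ℝ => (1/x) * (1 - ((-x-1)/(-x)) * Real.log (1-(-x))))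
        (𝓝[<] (1:ℝ)) (𝓝 (1 - 2 * Real.log 2)) := by
      have hcont : ContinuousAt (fun x : ℝ => (1/x) * (1 - ((-x-1)/(-x)) * Real.log (1-(-x)))) 1 := by
        have hlog : ContinuousAt (fun x : ℝ => Real.log (1-(-x))) 1 := by
          exact (Real.continuousAt_log (by norm_num)).comp (by fun_prop)
        fun_prop (disch := norm_num)
      have := hcont.tendsto.mono_left (nhdsWithin_le_nhds (s := Set.Iio (1:ℝ)))
      convert this using 2
      norm_num
    have heq : ∀ᶠ x in 𝓝[<] (1:ℝ), (fun x => ∑' n, c n * x^n) x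
        = (1/x) * (1 - ((-x-1)/(-x)) * Real.log (1-(-x))) := by
      filter_upwards [Ioo_mem_nhdsLT_of_mem (by constructor <;> norm_num :
        (1:ℝ) ∈ Set.Ioc (0:ℝ) 1)] with x hx
      obtain ⟨hx0, hx1⟩ := hx
      have hxa : |(-x)| < 1 := by rw [abs_neg, abs_of_pos hx0]; exact hx1
      have hxne : -x ≠ 0 := by intro hh; apply absurd hx0; simp [neg_eq_zero.mp hh]
      have hB := hasSum_B1_lt hxa hxne
      have hB2 : HasSum (fun k : ℕ => c k * x^k)
          ((1/x) * (1 - ((-x-1)/(-x)) * Real.log (1-(-x)))) := by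
        have h3 := hB.mul_left (1/x)
        refine h3.congr_fun fun k => ?_
        have q1 : (0:ℝ) < (k:ℝ)+1 := by positivity
        have q2 : (0:ℝ) < (k:ℝ)+2 := by positivity
        rw [hc_def]
        simp only
        rw [show (-x)^(k+1) = (-1:ℝ)^(k+1) * x^(k+1) from by rw [neg_pow]]
        have hx' : x ≠ 0 := ne_of_gt hx0
        field_simp
        ring
      exact hB2.tsum_eq
    have hvalue : (∑' n, c n) = 1 - 2 * Real.log 2 :=
      tendsto_nhds_unique (habel.congr' heq) hg
    rw [hvalue] at hc
    convert hc using 2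
    norm_num
  · exact hasSum_B1_lt (abs_lt.2 ⟨h, ht1⟩) ht

noncomputable def Bval (t : ℝ) (m : ℕ) : ℝ :=
  (∑ j ∈ Finset.Icc 1 m, ((t-1)/t)^(m-j) / (j:ℝ)) - ((t-1)/t)^m * Real.log (1-t)

lemma Bval_one (t : ℝ) : Bval t 1 = 1 - (t-1)/t * Real.log (1-t) := by
  simp [Bval]

lemma Bval_succ (t : ℝ) (m : ℕ) :
    Bval t (m+1) = (t-1)/t * Bval t m + 1/((m:ℝ)+1) := by
  unfold Bval
  rw [Finset.sum_Icc_succ_top (by omega : 1 ≤ m+1)]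
  rw [Nat.sub_self, pow_zero]
  rw [mul_sub, Finset.mul_sum]
  have hterm : ∀ j ∈ Finset.Icc 1 m,
      ((t-1)/t)^(m+1-j) / (j:ℝ) = (t-1)/t * (((t-1)/t)^(m-j) / (j:ℝ)) := by
    intro j hj
    obtain ⟨h1, h2⟩ := Finset.mem_Icc.mp hj
    rw [show m+1-j = (m-j)+1 by omega, pow_succ]
    ring
  rw [show (∑ j ∈ Finset.Icc 1 m, (t-1)/t * (((t-1)/t)^(m-j) / (j:ℝ)))
      = ∑ j ∈ Finset.Icc 1 m, ((t-1)/t)^(m+1-j) / (j:ℝ) from Finset.sum_congr rfl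
        fun j hj => (hterm j hj).symm]
  push_cast
  ring

lemma hasSum_B {t : ℝ} (ht0 : -1 ≤ t) (ht1 : t < 1) (ht : t ≠ 0) (m : ℕ) :
    HasSum (fun k : ℕ => t^(k+1) / (((k:ℝ)+1) * (((m+1) + (k+1)).choose (k+1) : ℝ)))
      (Bval t (m+1)) := by
  induction m with
  | zero =>
    rw [Bval_one]
    refine (hasSum_B1 ht0 ht1 ht).congr_fun fun k => ?_
    have : (0+1+(k+1)).choose (k+1) = k+2 := by
      rw [show 0+1+(k+1) = (k+1)+1 by omega]
      exact Nat.choose_succ_self_right (k+1)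
    rw [this]
    push_cast
    ring_nf
  | succ m ih =>
    have shifted := (hasSum_nat_add_iff'
      (f := fun k : ℕ => t^(k+1) / (((k:ℝ)+1) * (((m+1) + (k+1)).choose (k+1) : ℝ))) 1).mpr ih
    have comb := ih.sub (shifted.mul_left (1/t))
    have key : ∀ k : ℕ,
        t^(k+1) / (((k:ℝ)+1) * (((m+1+1) + (k+1)).choose (k+1) : ℝ))
        = t^(k+1) / (((k:ℝ)+1) * (((m+1) + (k+1)).choose (k+1) : ℝ))
          - (1/t) * (t^((k+1)+1) / ((((k+1:ℕ):ℝ)+1) * (((m+1) + ((k+1)+1)).choose ((k+1)+1) : ℝ))) := by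
      intro k
      have hcb := coeff_b m k
      have e1 : m+1+1+(k+1) = m+2+(k+1) := by omega
      have e2 : m+1+(k+1+1) = m+1+(k+2) := by omega
      have e3 : k+1+1 = k+2 := by omega
      rw [e1, e2, e3]
      have c1 := choose_pos_real (m+2) (k+1)
      have c2 := choose_pos_real (m+1) (k+1)
      have c3 := choose_pos_real (m+1) (k+2)
      have q1 : ((k:ℝ)+1) ≠ 0 := by positivity
      have q2 : ((k:ℝ)+2) ≠ 0 := by positivity
      push_cast
      rw [div_eq_mul_inv, div_eq_mul_inv, div_eq_mul_inv, hcb, mul_sub]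
      field_simp
      ring
    have final := comb.congr_fun fun k => key k
    have hval : Bval t (m+1) - 1/t * (Bval t (m+1) - ∑ i ∈ Finset.range 1,
        t^(i+1) / (((i:ℝ)+1) * (((m+1) + (i+1)).choose (i+1) : ℝ))) = Bval t (m+1+1) := by
      rw [Finset.sum_range_one]
      have : (m+1+1).choose 1 = m+2 := Nat.choose_one_right _
      rw [show m+1+(0+1) = m+1+1 by omega, this, Bval_succ t (m+1)]
      push_cast
      field_simp
      ring
    rw [hval] at final
    exact final

lemma H_succ (m : ℕ) : H (m+1) = H m + 1/((m:ℝ)+1) := Finset.sum_range_succ _ m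
lemma H2_succ (m : ℕ) : H2 (m+1) = H2 m + 1/((m:ℝ)+1)^2 := Finset.sum_range_succ _ m

lemma Breindex (t : ℝ) (n : ℕ) :
    Bval t (n+1) = 1/((n:ℝ)+1) + (∑ k ∈ Finset.Icc 1 n, ((t-1)/t)^k / ((n+1-k : ℕ) : ℝ))
      - ((t-1)/t)^(n+1) * Real.log (1-t) := by
  unfold Bval
  rw [Finset.sum_Icc_succ_top (by omega : 1 ≤ n+1), Nat.sub_self, pow_zero]
  have hre : ∑ j ∈ Finset.Icc 1 n, ((t-1)/t)^(n+1-j)/(j:ℝ)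
      = ∑ k ∈ Finset.Icc 1 n, ((t-1)/t)^k / ((n+1-k : ℕ) : ℝ) := by
    refine Finset.sum_nbij' (fun j => n+1-j) (fun k => n+1-k) ?_ ?_ ?_ ?_ ?_
    · intro a ha; rw [Finset.mem_Icc] at ha; show n+1-a ∈ Finset.Icc 1 n
      rw [Finset.mem_Icc]; omega
    · intro a ha; rw [Finset.mem_Icc] at ha; show n+1-a ∈ Finset.Icc 1 n
      rw [Finset.mem_Icc]; omega
    · intro a ha; rw [Finset.mem_Icc] at ha; show n+1-(n+1-a) = a; omega
    · intro a ha; rw [Finset.mem_Icc] at ha; show n+1-(n+1-a) = a; omega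
    · intro a ha
      rw [Finset.mem_Icc] at ha
      show ((t-1)/t)^(n+1-a)/(a:ℝ) = ((t-1)/t)^(n+1-a) / ((n+1-(n+1-a) : ℕ) : ℝ)
      rw [show n+1-(n+1-a) = a by omega]
  rw [hre]
  push_cast
  ring

lemma Qdiff (t : ℝ) (n : ℕ) :
    (∑ k ∈ Finset.Icc 1 (n+1), (H k + H (n+1-k) - H (n+1))/(k:ℝ) * ((t-1)/t)^k)
      = (∑ k ∈ Finset.Icc 1 n, (H k + H (n-k) - H n)/(k:ℝ) * ((t-1)/t)^k)
        + (1/((n:ℝ)+1)) * ∑ k ∈ Finset.Icc 1 n, ((t-1)/t)^k / ((n+1-k : ℕ) : ℝ) := by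
  have hterm : ∀ k ∈ Finset.Icc 1 n,
      (H k + H (n+1-k) - H (n+1))/(k:ℝ) * ((t-1)/t)^k
        = (H k + H (n-k) - H n)/(k:ℝ) * ((t-1)/t)^k
          + 1/((n:ℝ)+1) * (((t-1)/t)^k / ((n+1-k : ℕ) : ℝ)) := by
    intro k hk
    rw [Finset.mem_Icc] at hk
    obtain ⟨hk1, hk2⟩ := hk
    rw [show n+1-k = (n-k)+1 by omega, H_succ (n-k), H_succ n]
    have hc1 : ((n-k : ℕ) : ℝ) = (n:ℝ) - (k:ℝ) := by rw [Nat.cast_sub hk2]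
    have hc2 : (((n-k)+1 : ℕ) : ℝ) = (n:ℝ) - (k:ℝ) + 1 := by push_cast [hc1]; ring
    rw [hc2, hc1]
    have q1 : (1:ℝ) ≤ (k:ℝ) := by exact_mod_cast hk1
    have q2 : (k:ℝ) ≤ (n:ℝ) := by exact_mod_cast hk2
    have r1 : (k:ℝ) ≠ 0 := by linarith
    have r2 : (n:ℝ) - (k:ℝ) + 1 ≠ 0 := by linarith
    have r3 : (n:ℝ) + 1 ≠ 0 := by positivity
    have hxy : (1/((n:ℝ)-(k:ℝ)+1) - 1/((n:ℝ)+1))/(k:ℝ)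
        = 1/((n:ℝ)+1) * (1/((n:ℝ)-(k:ℝ)+1)) := by
      field_simp
      ring
    linear_combination (((t-1)/t)^k) * hxy
  rw [Finset.sum_Icc_succ_top (by omega : 1 ≤ n+1)]
  rw [Nat.sub_self, show H 0 = (0:ℝ) by simp [H]]
  rw [Finset.sum_congr rfl hterm, Finset.sum_add_distrib, Finset.mul_sum]
  push_cast
  ring

noncomputable def RHSval (t : ℝ) (n : ℕ) : ℝ :=
  Li2 t - H2 n +
    Real.log (1 - t) * (∑ k ∈ Finset.Icc 1 n, 1 / (k : ℝ) * ((t - 1) / t) ^ k) -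
    ∑ k ∈ Finset.Icc 1 n, (H k + H (n - k) - H n) / (k : ℝ) * ((t - 1) / t) ^ k

lemma RHS_step (t : ℝ) (n : ℕ) :
    RHSval t (n+1) = RHSval t n - (1/((n:ℝ)+1)) * Bval t (n+1) := by
  unfold RHSval
  have e : (1:ℝ)/(((n:ℝ)+1)^2) = 1/((n:ℝ)+1) * (1/((n:ℝ)+1)) := by
    simp [pow_two, mul_inv]

  rw [Qdiff, H2_succ, e, Breindex, Finset.sum_Icc_succ_top (by omega : 1 ≤ n+1)]
  push_cast
  ring

lemma main_hasSum {t : ℝ} (ht0 : -1 ≤ t) (ht1 : t < 1) (ht : t ≠ 0) (n : ℕ) :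
    HasSum (fun k : ℕ => t^(k+1) / (((k:ℝ)+1)^2 * ((n + (k+1)).choose (k+1) : ℝ)))
      (RHSval t n) := by
  induction n with
  | zero =>
    have habs : |t| ≤ 1 := by rw [abs_le]; constructor <;> linarith
    have hs := (summable_sq habs).hasSum
    have h0 : RHSval t 0 = Li2 t := by
      unfold RHSval H2
      simp
    rw [h0, show Li2 t = ∑' k : ℕ, t^(k+1)/((k:ℝ)+1)^2 from rfl]
    refine hs.congr_fun fun k => ?_
    rw [show 0+(k+1) = k+1 by omega, Nat.choose_self]
    norm_num
  | succ n ih =>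
    have hB := hasSum_B ht0 ht1 ht n
    have comb := ih.sub (hB.mul_left (1/((n:ℝ)+1)))
    have key : ∀ k : ℕ, t^(k+1) / (((k:ℝ)+1)^2 * (((n+1) + (k+1)).choose (k+1) : ℝ))
        = t^(k+1) / (((k:ℝ)+1)^2 * ((n + (k+1)).choose (k+1) : ℝ))
          - 1/((n:ℝ)+1) * (t^(k+1) / (((k:ℝ)+1) * (((n+1) + (k+1)).choose (k+1) : ℝ))) := by
      intro k
      have hca := coeff_a n k
      rw [div_eq_mul_inv, div_eq_mul_inv, div_eq_mul_inv]
      linear_combination (-(t^(k+1))) * hca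
    rw [RHS_step]
    exact comb.congr_fun key

/-- For `n` a positive integer and real `t` with `-1 ≤ t < 1`, `t ≠ 0`,
`∑_{k=1}^∞ t^k/(k² C(n+k,k)) = Li₂(t) - H_n^{(2)}
  + log(1-t) ∑_{k=1}^n (1/k)((t-1)/t)^k - ∑_{k=1}^n ((H_k+H_{n-k}-H_n)/k)((t-1)/t)^k`. -/
theorem binom_series_sq (n : ℕ) (hn : 0 < n) (t : ℝ) (ht0 : -1 ≤ t) (ht1 : t < 1)
    (ht : t ≠ 0) :
    ∑' k : ℕ, t ^ (k + 1) / (((k : ℝ) + 1) ^ 2 * (Nat.choose (n + (k + 1)) (k + 1) : ℝ)) =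
      Li2 t - H2 n +
        Real.log (1 - t) * (∑ k ∈ Finset.Icc 1 n, 1 / (k : ℝ) * ((t - 1) / t) ^ k) -
        ∑ k ∈ Finset.Icc 1 n, (H k + H (n - k) - H n) / (k : ℝ) * ((t - 1) / t) ^ k := by
  have h := (main_hasSum ht0 ht1 ht n).tsum_eq
  unfold RHSval at h
  exact h
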